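/- Let h > 0 and Γ : ξ × ξ → ℂ with ‖Γ‖⁽²⁾ ≤ h². Let (f_n)_{n∈ℕ} be a family of functions f_n : ξ^n × ξ^n → ℂ with f_n = 0 for all but finitely many n, and let (ε_n)_{n∈ℕ} be any signs ε_n ∈ {−1,+1}. Then | Σ_{n∈ℕ} (ε_n/(n!)²) Σ_{x∈ξ^n, x̄∈ξ^n} f_n(x,x̄) · det[(Γ(x_i, x̄_j))_{1≤i,j≤n}] | ≤ Σ_{n∈ℕ} (h^{2n}/(n!)²) ‖f_n‖₁, where for n = 0 the determinant is 1. -/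

import Mathlib

open scoped ComplexInnerProductSpace in
lemma hadamard_rows (n : ℕ) (M : Matrix (Fin n) (Fin n) ℂ) :
    ‖M.det‖ ≤ ∏ i, Real.sqrt (∑ j, ‖M i j‖ ^ 2) := by
  classical
  have hrank : Module.finrank ℂ (EuclideanSpace ℂ (Fin n)) = Fintype.card (Fin n) := by
    simp [finrank_euclideanSpace]
  set f : Fin n → EuclideanSpace ℂ (Fin n) := fun i => (WithLp.equiv 2 _).symm (M i) with hf
  letI : WellFoundedLT (Fin n) := inferInstance
  set b := InnerProductSpace.gramSchmidtOrthonormalBasis hrank f with hb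
  set e := EuclideanSpace.basisFun (Fin n) ℂ with he
  have hmat : e.toBasis.toMatrix f = e.toBasis.toMatrix b.toBasis * b.toBasis.toMatrix f :=
    (Module.Basis.toMatrix_mul_toMatrix e.toBasis b.toBasis f).symm
  have hdet : e.toBasis.det f = e.toBasis.det b.toBasis * b.toBasis.det f := by
    rw [Module.Basis.det_apply, Module.Basis.det_apply, Module.Basis.det_apply, hmat, Matrix.det_mul]
  have h1 : ‖e.toBasis.det b.toBasis‖ = 1 := by
    rw [OrthonormalBasis.coe_toBasis]
    exact e.det_to_matrix_orthonormalBasis b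
  have h2 : b.toBasis.det f = ∏ i, ⟪b i, f i⟫ := InnerProductSpace.gramSchmidtOrthonormalBasis_det hrank f
  have hMdet : e.toBasis.det f = M.det := by
    rw [Module.Basis.det_apply, ← Matrix.det_transpose]
    congr 1
  calc ‖M.det‖ = ‖e.toBasis.det f‖ := by rw [hMdet]
    _ = ‖e.toBasis.det b.toBasis‖ * ‖b.toBasis.det f‖ := by rw [hdet, norm_mul]
    _ = ∏ i, ‖⟪b i, f i⟫‖ := by rw [h1, one_mul, h2, norm_prod]
    _ ≤ ∏ i, Real.sqrt (∑ j, ‖M i j‖ ^ 2) := by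
        apply Finset.prod_le_prod (fun i _ => norm_nonneg _)
        intro i _
        have := norm_inner_le_norm (𝕜 := ℂ) (b i) (f i)
        have hbi : ‖b i‖ = 1 := b.orthonormal.1 i
        rw [hbi, one_mul] at this
        refine this.trans ?_
        rw [EuclideanSpace.norm_eq]
        apply le_of_eq
        congr 1

/-- The norm `‖Γ‖⁽²⁾ = max_ζ (Σ_{ζ'} |Γ(ζ,ζ')|²)^{1/2}`. -/
noncomputable def twoNorm (ξ : Type*) [Fintype ξ] [Nonempty ξ] (Γ : ξ × ξ → ℂ) : ℝ :=
  Finset.univ.sup' Finset.univ_nonempty fun ζ =>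
    Real.sqrt (∑ ζ' : ξ, ‖Γ (ζ, ζ')‖ ^ 2)

/-- bound on fermionic Gaussian integrals via Hadamard's inequality,
`|Σ_n (ε_n/(n!)²) Σ_{x,x̄} f_n(x,x̄) det Γ(x_i,x̄_j)| ≤ Σ_n (h^{2n}/(n!)²) ‖f_n‖₁`. -/
theorem fermionic_gaussian_integral_bound (ξ : Type*) [Fintype ξ] [Nonempty ξ]
    (h : ℝ) (hh : 0 < h) (Γ : ξ × ξ → ℂ) (hΓ : twoNorm ξ Γ ≤ h ^ 2)
    (f : (n : ℕ) → (Fin n → ξ) → (Fin n → ξ) → ℂ)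
    (hfin : {n : ℕ | f n ≠ 0}.Finite)
    (ε : ℕ → ℝ) (hε : ∀ n, ε n = 1 ∨ ε n = -1) :
    ‖∑' n : ℕ, ((ε n : ℂ) / (Nat.factorial n : ℂ) ^ 2) *
        ∑ x : Fin n → ξ, ∑ y : Fin n → ξ,
          f n x y * (Matrix.of fun i j => Γ (x i, y j)).det‖ ≤
      ∑' n : ℕ, h ^ (2 * n) / (Nat.factorial n : ℝ) ^ 2 *
        ∑ x : Fin n → ξ, ∑ y : Fin n → ξ, ‖f n x y‖ := by
  classical
  set s := hfin.toFinset with hs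
  have hzero : ∀ n ∉ s, f n = 0 := by
    intro n hn
    by_contra hne
    exact hn (hfin.mem_toFinset.mpr hne)
  have hdetb : ∀ n (x y : Fin n → ξ),
      ‖(Matrix.of fun i j => Γ (x i, y j)).det‖ ≤ h ^ (2 * n) := by
    intro n x y
    by_cases hy : Function.Injective y
    · calc ‖(Matrix.of fun i j => Γ (x i, y j)).det‖
          ≤ ∏ i, Real.sqrt (∑ j, ‖Γ (x i, y j)‖ ^ 2) := hadamard_rows n _
        _ ≤ ∏ _i : Fin n, h ^ 2 := by
            apply Finset.prod_le_prod (fun _ _ => Real.sqrt_nonneg _)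
            intro i _
            have step1 : ∑ j, ‖Γ (x i, y j)‖ ^ 2
                ≤ ∑ ζ' : ξ, ‖Γ (x i, ζ')‖ ^ 2 := by
              calc ∑ j, ‖Γ (x i, y j)‖ ^ 2
                  = ∑ ζ' ∈ Finset.univ.image y, ‖Γ (x i, ζ')‖ ^ 2 :=
                    (Finset.sum_image (f := fun ζ' => ‖Γ (x i, ζ')‖ ^ 2)
                      (fun a _ b _ hab => hy hab)).symm
                _ ≤ ∑ ζ' : ξ, ‖Γ (x i, ζ')‖ ^ 2 :=
                    Finset.sum_le_sum_of_subset_of_nonneg (Finset.subset_univ _)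
                      (fun _ _ _ => by positivity)
            calc Real.sqrt (∑ j, ‖Γ (x i, y j)‖ ^ 2)
                ≤ Real.sqrt (∑ ζ' : ξ, ‖Γ (x i, ζ')‖ ^ 2) :=
                  Real.sqrt_le_sqrt step1
              _ ≤ twoNorm ξ Γ := by
                    unfold twoNorm
                    exact Finset.le_sup' (fun ζ => Real.sqrt (∑ ζ' : ξ, ‖Γ (ζ, ζ')‖ ^ 2))
                      (Finset.mem_univ (x i))
              _ ≤ h ^ 2 := hΓ
        _ = h ^ (2 * n) := by
            rw [Finset.prod_const, Finset.card_univ, Fintype.card_fin, ← pow_mul]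
    · obtain ⟨j₁, j₂, hjj, hne⟩ : ∃ j₁ j₂, y j₁ = y j₂ ∧ j₁ ≠ j₂ := by
        simp only [Function.Injective] at hy
        push_neg at hy
        obtain ⟨a, b, hab, hne⟩ := hy
        exact ⟨a, b, hab, hne⟩
      rw [Matrix.det_zero_of_column_eq (M := Matrix.of fun i j => Γ (x i, y j)) hne (fun k => by simp [hjj])]
      simp only [norm_zero]
      positivity
  have hL : ∀ n ∉ s, ((ε n : ℂ) / (Nat.factorial n : ℂ) ^ 2) *
      ∑ x : Fin n → ξ, ∑ y : Fin n → ξ,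
        f n x y * (Matrix.of fun i j => Γ (x i, y j)).det = 0 := by
    intro n hn
    rw [hzero n hn]
    simp
  have hR : ∀ n ∉ s, h ^ (2 * n) / (Nat.factorial n : ℝ) ^ 2 *
      ∑ x : Fin n → ξ, ∑ y : Fin n → ξ, ‖f n x y‖ = 0 := by
    intro n hn
    rw [hzero n hn]
    simp
  rw [tsum_eq_sum hL, tsum_eq_sum hR]
  refine le_trans (norm_sum_le _ _) (Finset.sum_le_sum ?_)
  intro n _
  rw [norm_mul]
  have hcoef : ‖(ε n : ℂ) / (Nat.factorial n : ℂ) ^ 2‖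
      = 1 / (Nat.factorial n : ℝ) ^ 2 := by
    rcases hε n with h1 | h1 <;>
      rw [norm_div, norm_pow] <;> simp [h1]
  rw [hcoef]
  have hsum : ‖∑ x : Fin n → ξ, ∑ y : Fin n → ξ,
        f n x y * (Matrix.of fun i j => Γ (x i, y j)).det‖
      ≤ h ^ (2 * n) * ∑ x : Fin n → ξ, ∑ y : Fin n → ξ, ‖f n x y‖ := by
    refine (norm_sum_le _ _).trans ?_
    refine le_trans (Finset.sum_le_sum fun x _ => norm_sum_le _ _) ?_
    rw [Finset.mul_sum]
    refine Finset.sum_le_sum fun x _ => ?_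
    rw [Finset.mul_sum]
    refine Finset.sum_le_sum fun y _ => ?_
    rw [norm_mul, mul_comm (h ^ (2 * n))]
    exact mul_le_mul_of_nonneg_left (hdetb n x y) (norm_nonneg _)
  calc 1 / (Nat.factorial n : ℝ) ^ 2 * ‖∑ x : Fin n → ξ, ∑ y : Fin n → ξ,
        f n x y * (Matrix.of fun i j => Γ (x i, y j)).det‖
      ≤ 1 / (Nat.factorial n : ℝ) ^ 2 *
        (h ^ (2 * n) * ∑ x : Fin n → ξ, ∑ y : Fin n → ξ, ‖f n x y‖) := by
        apply mul_le_mul_of_nonneg_left hsum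
        positivity
    _ = h ^ (2 * n) / (Nat.factorial n : ℝ) ^ 2 *
        ∑ x : Fin n → ξ, ∑ y : Fin n → ξ, ‖f n x y‖ := by ring
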